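/- For every π ∈ Sₙ, the Foata–Schützenberger map ȷ preserves the inverse descent set and complements the descent set: Id(ȷ(π)) = Id(π) and D(ȷ(π)) = {n−k : k ∈ D(π)}. -/

import Mathlib

/-- Value of the word `l` at 1-based position `i` (0 if out of range). -/
def wv (l : List ℕ) (i : ℕ) : ℕ := l.getD (i - 1) 0

/-- Descent set (1-based positions `i < n` with `wᵢ > wᵢ₊₁`). -/
def DSet (l : List ℕ) : Finset ℕ :=
  (Finset.Ico 1 l.length).filter fun i => wv l (i + 1) < wv l i

def des (l : List ℕ) : ℕ := (DSet l).card

def MAJ (l : List ℕ) : ℕ := ∑ i ∈ DSet l, i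

/-- First letter. -/
def Fst (l : List ℕ) : ℕ := wv l 1

/-- Number of triples (i, i+1, j) with i+1 < j ≤ n satisfying the pattern
condition `p a b c` where a = wᵢ, b = wᵢ₊₁, c = wⱼ. -/
def tripCount (l : List ℕ) (p : ℕ → ℕ → ℕ → Bool) : ℕ :=
  (((Finset.Ico 1 l.length) ×ˢ (Finset.Icc 1 l.length)).filter
    (fun q => q.1 + 1 < q.2 ∧ p (wv l q.1) (wv l (q.1 + 1)) (wv l q.2) = true)).card

/-- Number of triples (i, j, j+1) with i < j, j+1 ≤ n satisfying
`p a b c` where a = wᵢ, b = wⱼ, c = wⱼ₊₁. -/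
def tripCount2 (l : List ℕ) (p : ℕ → ℕ → ℕ → Bool) : ℕ :=
  (((Finset.Icc 1 l.length) ×ˢ (Finset.Ico 1 l.length)).filter
    (fun q => q.1 < q.2 ∧ p (wv l q.1) (wv l q.2) (wv l (q.2 + 1)) = true)).card

/-- STAT on permutations: occurrences of 21 + 132 + 213 + 321 (first two letters adjacent). -/
def STATp (l : List ℕ) : ℕ :=
  des l + tripCount l (fun a b c =>
    decide ((a < c ∧ c < b) ∨ (b < a ∧ a < c) ∨ (c < b ∧ b < a)))

/-- STAT on words: occurrences of 213 + 212 + 132 + 121 + 321 + 21 (first two letters adjacent). -/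
def STATw (l : List ℕ) : ℕ :=
  des l + tripCount l (fun a b c =>
    decide ((b < a ∧ a < c) ∨ (b < a ∧ a = c) ∨ (a < c ∧ c < b) ∨
            (a = c ∧ c < b) ∨ (c < b ∧ b < a)))

/-- Standardization (coding map) of a word. -/
def stdz (l : List ℕ) : List ℕ :=
  (List.range l.length).map fun i =>
    ((List.range l.length).filter fun j =>
      decide (l.getD j 0 < l.getD i 0 ∨ (l.getD j 0 = l.getD i 0 ∧ j ≤ i))).length

/-- Inverse descent set: values v of the standardization such that v+1 occurs before v. -/
def IdSet (l : List ℕ) : Finset ℕ :=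
  (Finset.Icc 1 l.length).filter fun v =>
    ∃ i ∈ Finset.range l.length, ∃ j ∈ Finset.range l.length,
      j < i ∧ (stdz l).getD i 0 = v ∧ (stdz l).getD j 0 = v + 1

def ides (l : List ℕ) : ℕ := (IdSet l).card

def IMAJ (l : List ℕ) : ℕ := ∑ i ∈ IdSet l, i

/-- `l` is a permutation of {1, …, n} written in one-line notation. -/
def IsPermList (l : List ℕ) : Prop := l.Perm (List.range' 1 l.length)

def INV (l : List ℕ) : ℕ :=
  (((Finset.Icc 1 l.length) ×ˢ (Finset.Icc 1 l.length)).filter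
    (fun q => q.1 < q.2 ∧ wv l q.2 < wv l q.1)).card

/-- Schensted row insertion: insert x into a row, possibly bumping an entry. -/
def rowIns (r : List ℕ) (x : ℕ) : List ℕ × Option ℕ :=
  match r.findIdx? (fun y => decide (x < y)) with
  | none => (r ++ [x], none)
  | some i => (r.set i x, r[i]?)

/-- Schensted insertion of a letter into a tableau (list of rows). -/
def insertT : List (List ℕ) → ℕ → List (List ℕ)
  | [], x => [[x]]
  | r :: rs, x =>
    match rowIns r x with
    | (r', none) => r' :: rs
    | (r', some y) => r' :: insertT rs y

/-- Insertion tableau P of a word. -/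
def Ptab (w : List ℕ) : List (List ℕ) := w.foldl insertT []

/-- Place label k in the recording tableau q at the first row where q is
shorter than the (new) shape `pshape`. -/
def growQ (k : ℕ) : List ℕ → List (List ℕ) → List (List ℕ)
  | _, [] => [[k]]
  | [], q => q
  | L :: Ls, r :: rs =>
      if r.length < L then (r ++ [k]) :: rs else r :: growQ k Ls rs

/-- Recording tableau Q of a word (labels 1, 2, …). -/
def Qtab (w : List ℕ) : List (List ℕ) :=
  (w.foldl (fun s x =>
      let p' := insertT s.1 x
      (p', growQ s.2.2 (p'.map List.length) s.2.1, s.2.2 + 1))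
    (([], [], 1) : List (List ℕ) × List (List ℕ) × ℕ)).2.1

/-- Reverse-complement of a permutation word. -/
def rcL (l : List ℕ) : List ℕ := l.reverse.map fun x => l.length + 1 - x

def shape (t : List (List ℕ)) : List ℕ := t.map List.length

/-- `σ = ȷ(l)`: σ is the permutation with RSK pair (P(l), Q(l^rc)). -/
def isFS (σ l : List ℕ) : Prop :=
  IsPermList σ ∧ σ.length = l.length ∧ Ptab σ = Ptab l ∧ Qtab σ = Qtab (rcL l)

namespace FS13
open List

abbrev Srt (r : List ℕ) : Prop := r.Pairwise (· < ·)
def RowsS (t : List (List ℕ)) : Prop := ∀ r ∈ t, Srt r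

theorem rowIns_spec (r : List ℕ) (x : ℕ) :
    (rowIns r x = (r ++ [x], none) ∧ ∀ y ∈ r, ¬ x < y) ∨
    ∃ i, ∃ hi : i < r.length, rowIns r x = (r.set i x, some (r[i])) ∧ x < r[i] ∧
      ∀ j (hj : j < i), ¬ x < r[j]'(hj.trans hi) := by
  cases h : r.findIdx? (fun y => decide (x < y)) with
  | none =>
    left
    refine ⟨by simp [rowIns, h], fun y hy => ?_⟩
    have := List.findIdx?_eq_none_iff.mp h y hy
    simpa using this
  | some i =>
    right
    rw [List.findIdx?_eq_some_iff_findIdx_eq] at h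
    obtain ⟨hi, hfi⟩ := h
    refine ⟨i, hi, ?_, ?_, ?_⟩
    · simp [rowIns, List.findIdx?_eq_some_iff_findIdx_eq.mpr ⟨hi, hfi⟩,
        List.getElem?_eq_getElem hi]
    · have := List.findIdx_getElem (p := fun y => decide (x < y)) (xs := r) (w := hfi ▸ hi)
      simpa [hfi] using this
    · intro j hj
      have := List.not_of_lt_findIdx (p := fun y => decide (x < y)) (xs := r) (hfi ▸ hj)
      simpa using this

def sRow : List (List ℕ) → ℕ → ℕ
  | [], _ => 0
  | r :: rs, x =>
    match (rowIns r x).2 with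
    | none => 0
    | some y => sRow rs y + 1

def bumpShape : List ℕ → ℕ → List ℕ
  | [], _ => [1]
  | L :: Ls, 0 => (L + 1) :: Ls
  | L :: Ls, d + 1 => L :: bumpShape Ls d

theorem srt_set (r : List ℕ) (x i : ℕ) (hi : i < r.length) (hs : Srt r) (hx : x < r[i])
    (hlow : ∀ j (h : j < i), r[j]'(h.trans hi) < x) : Srt (r.set i x) := by
  rw [Srt, List.pairwise_iff_getElem] at hs
  refine List.pairwise_iff_getElem.mpr ?_
  intro a b ha hb hab
  simp only [List.length_set] at ha hb
  rw [List.getElem_set, List.getElem_set]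
  split <;> split
  · omega
  · -- a = i, b ≠ i, so i < b
    next h1 h2 =>
      exact lt_trans hx (by have := hs i b hi hb (by omega); exact h1 ▸ this)
  · next h1 h2 => exact hlow a (by omega)
  · exact hs a b ha hb hab

theorem srt_append (r : List ℕ) (x : ℕ) (hs : Srt r) (h : ∀ y ∈ r, y < x) :
    Srt (r ++ [x]) := by
  refine List.pairwise_append.mpr ?_
  exact ⟨hs, List.pairwise_singleton _ _, fun a ha b hb => by
    simp at hb; subst hb; exact h a ha⟩

theorem insertT_main : ∀ (t : List (List ℕ)) (x : ℕ),
    (insertT t x).flatten.Perm (x :: t.flatten) ∧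
    shape (insertT t x) = bumpShape (shape t) (sRow t x) ∧
    sRow t x ≤ t.length ∧
    (RowsS t → (x :: t.flatten).Nodup → RowsS (insertT t x)) := by
  intro t
  induction t with
  | nil =>
    intro x
    refine ⟨by simp [insertT], by simp [insertT, shape, sRow, bumpShape], by simp [sRow], ?_⟩
    intro _ _ r hr
    simp [insertT] at hr
    subst hr
    exact List.pairwise_singleton _ _
  | cons r rs ih =>
    intro x
    rcases rowIns_spec r x with ⟨heq, hle⟩ | ⟨i, hi, heq, hxi, hlow⟩
    · have hins : insertT (r :: rs) x = (r ++ [x]) :: rs := by simp [insertT, heq]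
      have hsr : sRow (r :: rs) x = 0 := by
        simp [sRow, heq]
      refine ⟨?_, ?_, ?_, ?_⟩
      · rw [hins]
        simp only [List.flatten_cons]
        calc (r ++ [x]) ++ rs.flatten ~ (x :: r) ++ rs.flatten :=
              (List.perm_append_singleton x r).append_right _
          _ = x :: (r :: rs).flatten := by simp
      · rw [hins, hsr]; simp [shape, bumpShape]
      · omega
      · intro hrows hnd
        intro q hq
        rw [hins] at hq
        rcases List.mem_cons.mp hq with hq | hq
        · subst hq
          refine srt_append r x (hrows r (by simp)) ?_
          intro y hy
          have h1 : y ≤ x := not_lt.mp (hle y hy)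
          have h2 : y ≠ x := by
            intro hxy; subst hxy
            have : y ∈ (r :: rs).flatten := by simp [hy]
            simp at hnd
            exact hnd.1.1 (by simpa using hy)
          omega
        · exact hrows q (by simp [hq])
    · set y := r[i] with hy
      have hins : insertT (r :: rs) x = r.set i x :: insertT rs y := by
        simp [insertT, heq]
      have hsr : sRow (r :: rs) x = sRow rs y + 1 := by
        simp [sRow, heq]
      obtain ⟨ihp, ihs, ihl, ihr⟩ := ih y
      refine ⟨?_, ?_, ?_, ?_⟩
      · rw [hins]
        simp only [List.flatten_cons]
        have h1 : (insertT rs y).flatten.Perm (y :: rs.flatten) := ihp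
        calc r.set i x ++ (insertT rs y).flatten
            ~ r.set i x ++ (y :: rs.flatten) := h1.append_left _
          _ ~ x :: (r :: rs).flatten := by
              have hr : r = r.take i ++ r[i] :: r.drop (i + 1) := by
                conv_lhs => rw [← List.take_append_drop i r]
                congr 1
                exact List.drop_eq_getElem_cons hi
              have hset : r.set i x = r.take i ++ x :: r.drop (i + 1) := by
                rw [List.set_eq_take_append_cons_drop]; simp [hi]
              rw [hset]
              conv_rhs => rw [List.flatten_cons]; rw [hr]
              calc (r.take i ++ x :: r.drop (i+1)) ++ (y :: rs.flatten)
                  = r.take i ++ x :: (r.drop (i+1) ++ y :: rs.flatten) := by simp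
                _ ~ x :: (r.take i ++ (r.drop (i+1) ++ y :: rs.flatten)) := List.perm_middle
                _ ~ x :: (y :: (r.take i ++ (r.drop (i+1) ++ rs.flatten))) := by
                    refine List.Perm.cons x ?_
                    calc r.take i ++ (r.drop (i+1) ++ y :: rs.flatten)
                        = (r.take i ++ r.drop (i+1)) ++ y :: rs.flatten := by simp
                      _ ~ y :: ((r.take i ++ r.drop (i+1)) ++ rs.flatten) := List.perm_middle
                      _ = y :: (r.take i ++ (r.drop (i+1) ++ rs.flatten)) := by simp
                _ ~ x :: ((r.take i ++ r[i] :: r.drop (i+1)) ++ rs.flatten) := by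
                    refine List.Perm.cons x ?_
                    calc y :: (r.take i ++ (r.drop (i+1) ++ rs.flatten))
                        = y :: ((r.take i ++ r.drop (i+1)) ++ rs.flatten) := by simp
                      _ ~ (r.take i ++ y :: r.drop (i+1)) ++ rs.flatten := by
                          exact (List.perm_middle.symm).append_right _
                      _ = (r.take i ++ r[i] :: r.drop (i+1)) ++ rs.flatten := rfl
      · rw [hins, hsr]
        simp only [shape] at ihs ⊢
        simp [bumpShape, List.length_set, ihs]
      · rw [hsr]; simpa using ihl
      · intro hrows hnd
        have hndf : ((r :: rs).flatten).Nodup := (List.nodup_cons.mp hnd).2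
        have hxn : x ∉ (r :: rs).flatten := (List.nodup_cons.mp hnd).1
        simp only [List.flatten_cons, List.nodup_append'] at hndf
        obtain ⟨hndr, hndrs, hdisj⟩ := hndf
        have hyrs : y ∉ rs.flatten := hdisj (List.getElem_mem hi)
        have hxr : x ∉ r := fun hc => hxn (by simp [hc])
        intro q hq
        rw [hins] at hq
        rcases List.mem_cons.mp hq with hq | hq
        · subst hq
          refine srt_set r x i hi (hrows r (by simp)) hxi ?_
          intro j hj
          have h1 := hlow j hj
          have h2 : r[j]'(hj.trans hi) ≠ x := fun hc => hxr (hc ▸ List.getElem_mem _)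
          omega
        · refine ihr (fun q' hq' => hrows q' (by simp [hq'])) ?_ q hq
          rw [List.nodup_cons]
          exact ⟨hyrs, hndrs⟩

theorem insertT_perm (t : List (List ℕ)) (x : ℕ) :
    (insertT t x).flatten.Perm (x :: t.flatten) := (insertT_main t x).1

theorem shape_insertT (t : List (List ℕ)) (x : ℕ) :
    shape (insertT t x) = bumpShape (shape t) (sRow t x) := (insertT_main t x).2.1

theorem sRow_le (t : List (List ℕ)) (x : ℕ) : sRow t x ≤ t.length := (insertT_main t x).2.2.1

theorem insertT_rowsS (t : List (List ℕ)) (x : ℕ) (h1 : RowsS t)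
    (h2 : (x :: t.flatten).Nodup) : RowsS (insertT t x) := (insertT_main t x).2.2.2 h1 h2

end FS13
namespace FS13
open List

theorem nodup3 {x x' : ℕ} {r F : List ℕ} (hnd : (x :: x' :: (r ++ F)).Nodup) :
    x ≠ x' ∧ x ∉ r ∧ x ∉ F ∧ x' ∉ r ∧ x' ∉ F ∧ r.Nodup ∧ F.Nodup ∧ r.Disjoint F := by
  simp only [List.nodup_cons, List.mem_cons, List.mem_append, List.nodup_append'] at hnd
  push_neg at hnd
  exact ⟨hnd.1.1, hnd.1.2.1, hnd.1.2.2, hnd.2.1.1, hnd.2.1.2, hnd.2.2.1, hnd.2.2.2.1,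
    hnd.2.2.2.2⟩


theorem getElem_set_ne' {l : List ℕ} {i j a : ℕ} (h : i ≠ j) (hj : j < (l.set i a).length) :
    (l.set i a)[j] = l[j]'(by simpa using hj) := by
  rw [List.getElem_set, if_neg h]

theorem getElem_set_self' {l : List ℕ} {i a : ℕ} (hi : i < (l.set i a).length) :
    (l.set i a)[i] = a := by
  rw [List.getElem_set, if_pos rfl]

theorem bump_lt : ∀ (t : List (List ℕ)) (x x' : ℕ), RowsS t →
    (x :: x' :: t.flatten).Nodup → x' < x → sRow t x < sRow (insertT t x) x' := by
  intro t
  induction t with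
  | nil =>
    intro x x' _ _ hlt
    have : insertT [] x = [[x]] := by simp [insertT]
    rw [this]
    have h0 : sRow ([] : List (List ℕ)) x = 0 := by simp [sRow]
    rw [h0]
    rcases rowIns_spec [x] x' with ⟨_, hle⟩ | ⟨j, hj, heq, _, _⟩
    · exact absurd hlt (hle x (by simp))
    · simp [sRow, heq]
  | cons r rs ih =>
    intro x x' hrows hnd hlt
    obtain ⟨hxx', hxr, hxF, hx'r, hx'F, hndr, hndF, hdisj⟩ :=
      nodup3 (r := r) (F := rs.flatten) (by simpa using hnd)
    rcases rowIns_spec r x with ⟨heq, hle⟩ | ⟨i, hi, heq, hxi, hlow⟩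
    · have hins : insertT (r :: rs) x = (r ++ [x]) :: rs := by simp [insertT, heq]
      have hsr : sRow (r :: rs) x = 0 := by simp [sRow, heq]
      rw [hins, hsr]
      rcases rowIns_spec (r ++ [x]) x' with ⟨_, hle'⟩ | ⟨j, hj, heq', _, _⟩
      · exact absurd hlt (hle' x (by simp))
      · simp [sRow, heq']
    · set y := r[i] with hy
      have hins : insertT (r :: rs) x = r.set i x :: insertT rs y := by simp [insertT, heq]
      have hsr : sRow (r :: rs) x = sRow rs y + 1 := by simp [sRow, heq]
      rw [hins, hsr]
      rcases rowIns_spec (r.set i x) x' with ⟨_, hleA⟩ | ⟨j, hjA, heqA, hx'j, hkA⟩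
      · exfalso
        have hxA : x ∈ r.set i x := by
          have h := List.getElem_mem (l := r.set i x) (n := i) (by simpa using hi)
          rwa [getElem_set_self' (by simpa using hi)] at h
        exact absurd hlt (hleA x hxA)
      · simp only [List.length_set] at hjA
        have hji : j ≤ i := by
          by_contra hc
          push_neg at hc
          have := hkA i (by simpa using (by omega : i < j))
          rw [getElem_set_self' (by simpa using hi)] at this
          exact this hlt
        have hy' : (r.set i x)[j]'(by simpa using hjA) < y := by
          rcases eq_or_lt_of_le hji with hj_eq | hj_lt
          · subst hj_eq
            rw [getElem_set_self' (by simpa using hjA)]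
            exact hxi
          · rw [getElem_set_ne' (by omega) (by simpa using hjA)]
            have h1 : ¬ x < r[j]'(by omega) := hlow j hj_lt
            have h2 : r[j]'(by omega) ≠ x := fun hc => hxr (hc ▸ List.getElem_mem _)
            have : r[j]'(by omega) < x := by omega
            exact this.trans hxi
        have hmem : (r.set i x)[j]'(by simpa using hjA) = x ∨
            (r.set i x)[j]'(by simpa using hjA) ∈ r := by
          rcases eq_or_ne j i with hj_eq | hj_ne
          · left; subst hj_eq; exact getElem_set_self' (by simpa using hjA)
          · right
            rw [getElem_set_ne' hj_ne.symm (by simpa using hjA)]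
            exact List.getElem_mem _
        have hyF : y ∉ rs.flatten := hdisj (List.getElem_mem hi)
        have hy'F : (r.set i x)[j]'(by simpa using hjA) ∉ rs.flatten := by
          rcases hmem with h | h
          · rw [h]; exact hxF
          · exact hdisj h
        have hih := ih y ((r.set i x)[j]'(by simpa using hjA))
          (fun q hq => hrows q (by simp [hq]))
          (by
            simp only [List.nodup_cons, List.mem_cons]
            exact ⟨by push_neg; exact ⟨hy'.ne', hyF⟩, hy'F, hndF⟩) hy'
        simp only [sRow, heqA]
        omega

theorem bump_le : ∀ (t : List (List ℕ)) (x x' : ℕ), RowsS t →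
    (x :: x' :: t.flatten).Nodup → x < x' → sRow (insertT t x) x' ≤ sRow t x := by
  intro t
  induction t with
  | nil =>
    intro x x' _ _ hlt
    have hins : insertT [] x = [[x]] := by simp [insertT]
    rw [hins]
    rcases rowIns_spec [x] x' with ⟨heq, _⟩ | ⟨j, hj, heq, hgt, _⟩
    · simp [sRow, heq]
    · exfalso
      have : [x][j]'hj = x := by
        have : j = 0 := by simp at hj; omega
        subst this; simp
      rw [this] at hgt
      omega
  | cons r rs ih =>
    intro x x' hrows hnd hlt
    obtain ⟨hxx', hxr, hxF, hx'r, hx'F, hndr, hndF, hdisj⟩ :=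
      nodup3 (r := r) (F := rs.flatten) (by simpa using hnd)
    rcases rowIns_spec r x with ⟨heq, hle⟩ | ⟨i, hi, heq, hxi, hlow⟩
    · have hins : insertT (r :: rs) x = (r ++ [x]) :: rs := by simp [insertT, heq]
      have hsr : sRow (r :: rs) x = 0 := by simp [sRow, heq]
      rw [hins, hsr]
      rcases rowIns_spec (r ++ [x]) x' with ⟨heq', _⟩ | ⟨j, hj, heq', hgt, _⟩
      · simp [sRow, heq']
      · exfalso
        have hmem : (r ++ [x])[j] ∈ r ++ [x] := List.getElem_mem _
        rcases List.mem_append.mp hmem with h | h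
        · have := hle _ h
          omega
        · simp at h
          omega
    · set y := r[i] with hy
      have hins : insertT (r :: rs) x = r.set i x :: insertT rs y := by simp [insertT, heq]
      have hsr : sRow (r :: rs) x = sRow rs y + 1 := by simp [sRow, heq]
      rw [hins, hsr]
      rcases rowIns_spec (r.set i x) x' with ⟨heqA, _⟩ | ⟨j, hjA, heqA, hx'j, hkA⟩
      · simp [sRow, heqA]
      · simp only [List.length_set] at hjA
        have hij : i < j := by
          by_contra hc
          push_neg at hc
          rcases eq_or_lt_of_le hc with hj_eq | hj_lt
          · subst hj_eq
            rw [getElem_set_self' (by simpa using hjA)] at hx'j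
            omega
          · rw [getElem_set_ne' (by omega) (by simpa using hjA)] at hx'j
            have := hlow j hj_lt
            omega
        have hy' : (r.set i x)[j]'(by simpa using hjA) = r[j]'(by omega) :=
          getElem_set_ne' (by omega) (by simpa using hjA)
        have hyy' : y < (r.set i x)[j]'(by simpa using hjA) := by
          rw [hy']
          exact List.pairwise_iff_getElem.mp (hrows r (by simp)) i j hi (by omega) hij
        have hy'F : (r.set i x)[j]'(by simpa using hjA) ∉ rs.flatten := by
          rw [hy']; exact hdisj (List.getElem_mem _)
        have hyF : y ∉ rs.flatten := hdisj (List.getElem_mem hi)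
        have hih := ih y ((r.set i x)[j]'(by simpa using hjA))
          (fun q hq => hrows q (by simp [hq]))
          (by
            simp only [List.nodup_cons, List.mem_cons]
            exact ⟨by push_neg; exact ⟨hyy'.ne, hyF⟩, hy'F, hndF⟩) hyy'
        simp only [sRow, heqA]
        omega

end FS13
namespace FS13
open List

theorem Ptab_snoc (w : List ℕ) (x : ℕ) : Ptab (w ++ [x]) = insertT (Ptab w) x := by
  simp [Ptab, List.foldl_append]

theorem Ptab_inv (w : List ℕ) : (Ptab w).flatten.Perm w ∧ (w.Nodup → RowsS (Ptab w)) := by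
  induction w using List.reverseRecOn with
  | nil => exact ⟨by simp [Ptab], fun _ r hr => by simp [Ptab] at hr⟩
  | append_singleton w x ih =>
    obtain ⟨ihp, ihr⟩ := ih
    rw [Ptab_snoc]
    constructor
    · calc (insertT (Ptab w) x).flatten ~ x :: (Ptab w).flatten := insertT_perm _ _
        _ ~ x :: w := ihp.cons x
        _ ~ w ++ [x] := (List.perm_append_singleton x w).symm
    · intro hnd
      have hw : w.Nodup := (List.nodup_append.mp hnd).1
      have hxw : x ∉ w := by
        have := (List.nodup_append'.mp hnd).2.2
        intro hc; exact this hc (by simp)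
      refine insertT_rowsS _ _ (ihr hw) ?_
      rw [List.nodup_cons]
      exact ⟨fun hc => hxw (ihp.mem_iff.mp hc), ihp.nodup_iff.mpr hw⟩

def Rrow (w : List ℕ) (k : ℕ) : ℕ := sRow (Ptab (w.take (k - 1))) (wv w k)

theorem desc_iff (w : List ℕ) (hw : w.Nodup) (k : ℕ) (hk1 : 1 ≤ k) (hk2 : k + 1 ≤ w.length) :
    (wv w (k + 1) < wv w k ↔ Rrow w k < Rrow w (k + 1)) := by
  have hk1' : k - 1 < w.length := by omega
  have hk' : k < w.length := by omega
  have hx : wv w k = w[k - 1] := List.getD_eq_getElem w 0 hk1'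
  have hx' : wv w (k + 1) = w[k] := by
    have : k + 1 - 1 = k := by omega
    rw [wv, this]
    exact List.getD_eq_getElem w 0 hk'
  have htake : w.take k = w.take (k - 1) ++ [w[k - 1]] := by
    conv_lhs => rw [show k = (k - 1) + 1 by omega]
    rw [List.take_succ, List.getElem?_eq_getElem hk1']
    rfl
  have hP : Ptab (w.take k) = insertT (Ptab (w.take (k - 1))) (w[k - 1]) := by
    rw [htake, Ptab_snoc]
  have hR : Rrow w k = sRow (Ptab (w.take (k - 1))) (w[k - 1]) := by rw [Rrow, hx]
  have hR' : Rrow w (k + 1) =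
      sRow (insertT (Ptab (w.take (k - 1))) (w[k - 1])) (w[k]) := by
    rw [Rrow, show k + 1 - 1 = k by omega, hx', hP]
  set t := Ptab (w.take (k - 1)) with ht
  have hsub : (w.take (k - 1)).Nodup := hw.sublist (List.take_sublist _ _)
  have hrows : RowsS t := (Ptab_inv _).2 hsub
  have hperm : t.flatten.Perm (w.take (k - 1)) := (Ptab_inv _).1
  have hne : w[k - 1] ≠ w[k] := by
    intro hc
    have := (List.Nodup.getElem_inj_iff hw).mp hc
    omega
  have hmemtake : ∀ (j : ℕ) (hj : j < w.length), ¬ j < k - 1 → w[j] ∉ w.take (k - 1) := by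
    intro j hj hjk hc
    rw [List.mem_take_iff_getElem] at hc
    obtain ⟨i, hi, hieq⟩ := hc
    have hiw : i < w.length := by omega
    have := (List.Nodup.getElem_inj_iff hw).mp hieq
    omega
  have hnd : (w[k - 1] :: w[k] :: t.flatten).Nodup := by
    rw [List.nodup_cons, List.nodup_cons]
    refine ⟨?_, ?_, hperm.nodup_iff.mpr hsub⟩
    · rw [List.mem_cons]
      push_neg
      exact ⟨hne, fun hc => hmemtake (k - 1) hk1' (by omega) (hperm.mem_iff.mp hc)⟩
    · exact fun hc => hmemtake k hk' (by omega) (hperm.mem_iff.mp hc)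
  rw [hx, hx', hR, hR']
  constructor
  · intro hlt
    exact bump_lt t _ _ hrows hnd hlt
  · intro hlt
    by_contra hc
    push_neg at hc
    have : w[k - 1] < w[k] := by
      rcases lt_or_eq_of_le hc with h | h
      · exact h
      · exact absurd h hne
    have := bump_le t _ _ hrows hnd this
    omega

theorem DSet_char (w : List ℕ) (hw : w.Nodup) :
    DSet w = (Finset.Ico 1 w.length).filter fun k => Rrow w k < Rrow w (k + 1) := by
  unfold DSet
  refine Finset.filter_congr ?_
  intro k hk
  rw [Finset.mem_Ico] at hk
  exact desc_iff w hw k hk.1 (by omega)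

/-! ### Q tableau -/

def addAt : List (List ℕ) → ℕ → ℕ → List (List ℕ)
  | [], _, k => [[k]]
  | r :: rs, 0, k => (r ++ [k]) :: rs
  | r :: rs, d + 1, k => r :: addAt rs d k

theorem growQ_eq : ∀ (q : List (List ℕ)) (d k : ℕ), d ≤ q.length →
    growQ k (bumpShape (shape q) d) q = addAt q d k := by
  intro q
  induction q with
  | nil =>
    intro d k hd
    have hd0 : d = 0 := by simpa using hd
    subst hd0
    simp [shape, bumpShape, growQ, addAt]
  | cons r rs ih =>
    intro d k hd
    match d with
    | 0 => simp [shape, bumpShape, growQ, addAt]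
    | d + 1 =>
      simp only [shape, List.map_cons, bumpShape, growQ, addAt]
      rw [if_neg (by omega)]
      congr 1
      exact ih d k (by simpa using hd)

theorem shape_addAt : ∀ (q : List (List ℕ)) (d k : ℕ), d ≤ q.length →
    shape (addAt q d k) = bumpShape (shape q) d := by
  intro q
  induction q with
  | nil =>
    intro d k hd
    have hd0 : d = 0 := by simpa using hd
    subst hd0
    simp [shape, bumpShape, addAt]
  | cons r rs ih =>
    intro d k hd
    match d with
    | 0 => simp [shape, bumpShape, addAt]
    | d + 1 =>
      simp only [shape, List.map_cons, bumpShape, addAt, List.cons.injEq, true_and]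
      exact ih d k (by simpa using hd)

theorem flatten_addAt : ∀ (q : List (List ℕ)) (d k : ℕ), d ≤ q.length →
    (addAt q d k).flatten.Perm (q.flatten ++ [k]) := by
  intro q
  induction q with
  | nil =>
    intro d k hd
    have hd0 : d = 0 := by simpa using hd
    subst hd0
    simp [addAt]
  | cons r rs ih =>
    intro d k hd
    match d with
    | 0 =>
      simp only [addAt, List.flatten_cons]
      calc (r ++ [k]) ++ rs.flatten ~ r ++ ([k] ++ rs.flatten) := by rw [List.append_assoc]
        _ ~ r ++ (rs.flatten ++ [k]) := (List.perm_append_comm).append_left r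
        _ = (r ++ rs.flatten) ++ [k] := by rw [List.append_assoc]
    | d + 1 =>
      simp only [addAt, List.flatten_cons]
      calc r ++ (addAt rs d k).flatten ~ r ++ (rs.flatten ++ [k]) :=
            (ih d k (by simpa using hd)).append_left r
        _ = (r ++ rs.flatten) ++ [k] := by rw [List.append_assoc]

def rowOf (t : List (List ℕ)) (k : ℕ) : ℕ := t.findIdx fun r => decide (k ∈ r)

theorem rowOf_addAt_ne : ∀ (q : List (List ℕ)) (d m k : ℕ), d ≤ q.length → m ≠ k →
    k ∈ q.flatten → rowOf (addAt q d m) k = rowOf q k := by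
  intro q
  induction q with
  | nil => intro d m k _ _ hk; simp at hk
  | cons r rs ih =>
    intro d m k hd hmk hk
    match d with
    | 0 =>
      have hiff : (k ∈ r ++ [m]) ↔ (k ∈ r) := by
        simp only [List.mem_append, List.mem_singleton]
        constructor
        · rintro (h | h)
          · exact h
          · exact absurd h.symm hmk
        · exact Or.inl
      simp only [addAt, rowOf, List.findIdx_cons]
      rw [show (decide (k ∈ r ++ [m])) = decide (k ∈ r) from decide_eq_decide.mpr hiff]
    | d + 1 =>
      simp only [addAt, rowOf, List.findIdx_cons]
      by_cases hkr : k ∈ r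
      · simp [hkr]
      · have hkrs : k ∈ rs.flatten := by
          simp only [List.flatten_cons, List.mem_append] at hk
          tauto
        rw [show (decide (k ∈ r)) = false from by simp [hkr]]
        simp only [Bool.cond_false]
        have := ih d m k (by simpa using hd) hmk hkrs
        simp only [rowOf] at this
        omega

theorem rowOf_addAt_self : ∀ (q : List (List ℕ)) (d m : ℕ), d ≤ q.length →
    m ∉ q.flatten → rowOf (addAt q d m) m = d := by
  intro q
  induction q with
  | nil =>
    intro d m hd _
    have hd0 : d = 0 := by simpa using hd
    subst hd0
    simp [addAt, rowOf, List.findIdx_cons]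
  | cons r rs ih =>
    intro d m hd hm
    have hmr : m ∉ r := fun hc => hm (by simp [hc])
    match d with
    | 0 => simp [addAt, rowOf, List.findIdx_cons]
    | d + 1 =>
      simp only [addAt, rowOf, List.findIdx_cons]
      rw [show (decide (m ∈ r)) = false from by simp [hmr]]
      simp only [Bool.cond_false]
      have := ih d m (by simpa using hd) (fun hc => hm (by simp [hc]))
      simp only [rowOf] at this
      omega

end FS13
namespace FS13
open List

def qstep (s : List (List ℕ) × List (List ℕ) × ℕ) (x : ℕ) :
    List (List ℕ) × List (List ℕ) × ℕ :=
  let p' := insertT s.1 x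
  (p', growQ s.2.2 (p'.map List.length) s.2.1, s.2.2 + 1)

theorem Qtab_eq (w : List ℕ) : Qtab w = (w.foldl qstep ([], [], 1)).2.1 := rfl

theorem qfold_parts (w : List ℕ) :
    (w.foldl qstep ([], [], 1)).1 = Ptab w ∧
    (w.foldl qstep ([], [], 1)).2.2 = w.length + 1 := by
  induction w using List.reverseRecOn with
  | nil => exact ⟨rfl, rfl⟩
  | append_singleton w x ih =>
    rw [List.foldl_append]
    simp only [List.foldl_cons, List.foldl_nil]
    constructor
    · show insertT (w.foldl qstep ([], [], 1)).1 x = _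
      rw [ih.1, Ptab_snoc]
    · show (w.foldl qstep ([], [], 1)).2.2 + 1 = _
      rw [ih.2]
      simp

theorem Qtab_snoc (w : List ℕ) (x : ℕ) :
    Qtab (w ++ [x]) = growQ (w.length + 1) (shape (insertT (Ptab w) x)) (Qtab w) := by
  rw [Qtab_eq, List.foldl_append]
  simp only [List.foldl_cons, List.foldl_nil]
  show growQ (w.foldl qstep ([], [], 1)).2.2
      ((insertT (w.foldl qstep ([], [], 1)).1 x).map List.length)
      (w.foldl qstep ([], [], 1)).2.1 = _
  rw [(qfold_parts w).1, (qfold_parts w).2, ← Qtab_eq]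
  rfl

theorem shape_length (t : List (List ℕ)) : (shape t).length = t.length := by
  simp [shape]

theorem Q_inv (w : List ℕ) :
    shape (Qtab w) = shape (Ptab w) ∧
    (Qtab w).flatten.Perm (List.range' 1 w.length) ∧
    ∀ k, 1 ≤ k → k ≤ w.length → rowOf (Qtab w) k = Rrow w k := by
  induction w using List.reverseRecOn with
  | nil =>
    refine ⟨rfl, by simp [Qtab, Ptab], ?_⟩
    intro k h1 h2
    simp at h2
    omega
  | append_singleton w x ih =>
    obtain ⟨ihs, ihp, ihr⟩ := ih
    have hdle : sRow (Ptab w) x ≤ (Qtab w).length := by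
      have h1 : sRow (Ptab w) x ≤ (Ptab w).length := sRow_le _ _
      have h2 : (Qtab w).length = (Ptab w).length := by
        rw [← shape_length, ← shape_length (Ptab w), ihs]
      omega
    have hQ : Qtab (w ++ [x]) = addAt (Qtab w) (sRow (Ptab w) x) (w.length + 1) := by
      rw [Qtab_snoc, shape_insertT, ← ihs, growQ_eq _ _ _ hdle]
    have hmemQ : ∀ k, k ∈ (Qtab w).flatten ↔ (1 ≤ k ∧ k ≤ w.length) := by
      intro k
      rw [ihp.mem_iff, List.mem_range'_1]
      omega
    refine ⟨?_, ?_, ?_⟩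
    · rw [hQ, shape_addAt _ _ _ hdle, ihs, Ptab_snoc, shape_insertT]
    · rw [hQ]
      have hlen : (w ++ [x]).length = w.length + 1 := by simp
      rw [hlen]
      calc (addAt (Qtab w) (sRow (Ptab w) x) (w.length + 1)).flatten
          ~ (Qtab w).flatten ++ [w.length + 1] := flatten_addAt _ _ _ hdle
        _ ~ List.range' 1 w.length ++ [w.length + 1] := ihp.append_right _
        _ = List.range' 1 (w.length + 1) := by rw [List.range'_1_concat, Nat.add_comm 1 w.length]
    · intro k hk1 hk2
      rw [hQ]
      rcases lt_or_eq_of_le hk2 with hk | hk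
      · have hkn : k ≤ w.length := by simp at hk; omega
        have h1 : rowOf (addAt (Qtab w) (sRow (Ptab w) x) (w.length + 1)) k
            = rowOf (Qtab w) k :=
          rowOf_addAt_ne _ _ _ _ hdle (by omega) ((hmemQ k).mpr ⟨hk1, hkn⟩)
        rw [h1, ihr k hk1 hkn, Rrow, Rrow]
        have ht : (w ++ [x]).take (k - 1) = w.take (k - 1) :=
          List.take_append_of_le_length (by omega)
        have hv : wv (w ++ [x]) k = wv w k := by
          rw [wv, wv, List.getD_append _ _ _ _ (by omega)]
        rw [ht, hv]
      · have hkval : k = w.length + 1 := by simp at hk; omega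
        subst hkval
        have h1 : rowOf (addAt (Qtab w) (sRow (Ptab w) x) (w.length + 1)) (w.length + 1)
            = sRow (Ptab w) x :=
          rowOf_addAt_self _ _ _ hdle (fun hc => by
            have := (hmemQ (w.length + 1)).mp hc; omega)
        rw [h1, Rrow]
        have ht : (w ++ [x]).take (w.length + 1 - 1) = w := by
          simp
        have hv : wv (w ++ [x]) (w.length + 1) = x := by
          rw [wv]
          have : w.length + 1 - 1 = w.length := by omega
          rw [this, List.getD_append_right _ _ _ _ (le_refl _)]
          simp
        rw [ht, hv]

theorem DSet_of_Q {v u : List ℕ} (hv : v.Nodup) (hu : u.Nodup) (hlen : v.length = u.length)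
    (hQ : Qtab v = Qtab u) : DSet v = DSet u := by
  rw [DSet_char v hv, DSet_char u hu, hlen]
  refine Finset.filter_congr ?_
  intro k hk
  rw [Finset.mem_Ico] at hk
  have h1 : Rrow v k = Rrow u k := by
    rw [← (Q_inv v).2.2 k hk.1 (by omega), ← (Q_inv u).2.2 k hk.1 (by omega), hQ]
  have h2 : Rrow v (k + 1) = Rrow u (k + 1) := by
    rw [← (Q_inv v).2.2 (k + 1) (by omega) (by omega),
      ← (Q_inv u).2.2 (k + 1) (by omega) (by omega), hQ]
  rw [h1, h2]

end FS13
namespace FS13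
open List

theorem isPerm_nodup {w : List ℕ} (h : IsPermList w) : w.Nodup := by
  exact h.nodup_iff.mpr (List.nodup_range' (s := 1) (n := w.length))

theorem isPerm_mem {w : List ℕ} (h : IsPermList w) {a : ℕ} :
    a ∈ w ↔ 1 ≤ a ∧ a ≤ w.length := by
  rw [h.mem_iff, List.mem_range'_1]
  omega

theorem wv_bounds {l : List ℕ} (hl : IsPermList l) {i : ℕ} (h1 : 1 ≤ i) (h2 : i ≤ l.length) :
    1 ≤ wv l i ∧ wv l i ≤ l.length := by
  have hi : i - 1 < l.length := by omega
  have he : wv l i = l[i - 1] := List.getD_eq_getElem l 0 hi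
  rw [he]
  exact (isPerm_mem hl).mp (List.getElem_mem hi)

theorem rcL_length (l : List ℕ) : (rcL l).length = l.length := by simp [rcL]

theorem map_range'_rc (n : ℕ) :
    (List.range' 1 n).map (fun x => n + 1 - x) = (List.range' 1 n).reverse := by
  apply List.ext_getElem
  · simp
  · intro i h1 h2
    simp only [List.getElem_map, List.getElem_reverse, List.getElem_range']
    simp only [List.length_map, List.length_range'] at h1
    simp only [List.length_range']
    omega

theorem rcL_isPerm {l : List ℕ} (hl : IsPermList l) : IsPermList (rcL l) := by
  rw [IsPermList, rcL_length]
  calc rcL l = (l.reverse).map (fun x => l.length + 1 - x) := rfl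
    _ ~ l.map (fun x => l.length + 1 - x) := (l.reverse_perm).map _
    _ ~ (List.range' 1 l.length).map (fun x => l.length + 1 - x) := hl.map _
    _ = (List.range' 1 l.length).reverse := map_range'_rc l.length
    _ ~ List.range' 1 l.length := List.reverse_perm _

theorem wv_rcL {l : List ℕ} {i : ℕ} (h1 : 1 ≤ i) (h2 : i ≤ l.length) :
    wv (rcL l) i = l.length + 1 - wv l (l.length + 1 - i) := by
  have hi : i - 1 < (rcL l).length := by rw [rcL_length]; omega
  have hni : l.length - i < l.length := by omega
  have e1 : wv (rcL l) i = (rcL l)[i - 1] := List.getD_eq_getElem _ 0 hi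
  have e2 : wv l (l.length + 1 - i) = l[l.length - i] := by
    rw [wv, show l.length + 1 - i - 1 = l.length - i by omega]
    exact List.getD_eq_getElem l 0 hni
  rw [e1, e2]
  show (l.reverse.map (fun x => l.length + 1 - x))[i-1]'(by simpa [rcL] using hi) = _
  rw [List.getElem_map, List.getElem_reverse]
  rw [← List.getD_eq_getElem l 0 (show l.length - 1 - (i - 1) < l.length by omega),
    ← List.getD_eq_getElem l 0 hni, show l.length - 1 - (i - 1) = l.length - i by omega]

theorem DSet_rcL {l : List ℕ} (hl : IsPermList l) :
    DSet (rcL l) = (DSet l).image fun k => l.length - k := by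
  ext k
  simp only [DSet, Finset.mem_image, Finset.mem_filter, Finset.mem_Ico, rcL_length]
  constructor
  · rintro ⟨⟨hk1, hk2⟩, hlt⟩
    refine ⟨l.length - k, ⟨⟨by omega, by omega⟩, ?_⟩, by omega⟩
    have e1 : wv (rcL l) (k + 1) = l.length + 1 - wv l (l.length - k) := by
      rw [wv_rcL (by omega) (by omega), show l.length + 1 - (k + 1) = l.length - k by omega]
    have e2 : wv (rcL l) k = l.length + 1 - wv l (l.length + 1 - k) := wv_rcL hk1 (by omega)
    rw [e1, e2] at hlt
    have b1 := wv_bounds hl (i := l.length - k) (by omega) (by omega)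
    have b2 := wv_bounds hl (i := l.length + 1 - k) (by omega) (by omega)
    rw [show l.length - k + 1 = l.length + 1 - k by omega]
    omega
  · rintro ⟨m, ⟨⟨hm1, hm2⟩, hlt⟩, hmk⟩
    have hk1 : 1 ≤ k := by omega
    have hk2 : k < l.length := by omega
    refine ⟨⟨hk1, hk2⟩, ?_⟩
    have e1 : wv (rcL l) (k + 1) = l.length + 1 - wv l (l.length - k) := by
      rw [wv_rcL (by omega) (by omega), show l.length + 1 - (k + 1) = l.length - k by omega]
    have e2 : wv (rcL l) k = l.length + 1 - wv l (l.length + 1 - k) := wv_rcL hk1 (by omega)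
    rw [e1, e2]
    have hm : m = l.length - k := by omega
    subst hm
    have b1 := wv_bounds hl (i := l.length - k) (by omega) (by omega)
    have b2 := wv_bounds hl (i := l.length - k + 1) (by omega) (by omega)
    rw [show l.length + 1 - k = l.length - k + 1 by omega]
    omega

end FS13
namespace FS13
open List

def KS (w w' : List ℕ) : Prop :=
  ∃ u v x y z, x < y ∧ y < z ∧
    ((w = u ++ [y, x, z] ++ v ∧ w' = u ++ [y, z, x] ++ v) ∨
     (w = u ++ [y, z, x] ++ v ∧ w' = u ++ [y, x, z] ++ v) ∨
     (w = u ++ [x, z, y] ++ v ∧ w' = u ++ [z, x, y] ++ v) ∨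
     (w = u ++ [z, x, y] ++ v ∧ w' = u ++ [x, z, y] ++ v))

def KEq : List ℕ → List ℕ → Prop := Relation.ReflTransGen KS

infixl:50 " ≋ " => KEq

theorem KS_symm : ∀ {w w' : List ℕ}, KS w w' → KS w' w := by
  rintro w w' ⟨u, v, x, y, z, h1, h2, hc⟩
  refine ⟨u, v, x, y, z, h1, h2, ?_⟩
  tauto

theorem KS_perm {w w' : List ℕ} (h : KS w w') : w.Perm w' := by
  obtain ⟨u, v, x, y, z, _, _, hc⟩ := h
  have swap1 : ∀ a b c : ℕ, ([a, b, c] : List ℕ).Perm [a, c, b] :=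
    fun a b c => (List.Perm.swap c b []).cons a
  have swap2 : ∀ a b c : ℕ, ([a, b, c] : List ℕ).Perm [b, a, c] :=
    fun a b c => List.Perm.swap b a [c]
  rcases hc with ⟨e1, e2⟩ | ⟨e1, e2⟩ | ⟨e1, e2⟩ | ⟨e1, e2⟩ <;> subst e1 <;> subst e2
  · simpa [List.append_assoc] using ((swap1 y x z).append_right v).append_left u
  · simpa [List.append_assoc] using ((swap1 y z x).append_right v).append_left u
  · simpa [List.append_assoc] using ((swap2 x z y).append_right v).append_left u
  · simpa [List.append_assoc] using ((swap2 z x y).append_right v).append_left u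

theorem KEq.refl (w : List ℕ) : KEq w w := Relation.ReflTransGen.refl

theorem KEq.trans {a b c : List ℕ} (h1 : KEq a b) (h2 : KEq b c) : KEq a c :=
  Relation.ReflTransGen.trans h1 h2

instance : Trans KEq KEq KEq := ⟨KEq.trans⟩

theorem KEq.single {a b : List ℕ} (h : KS a b) : KEq a b := Relation.ReflTransGen.single h

theorem KEq.symm {a b : List ℕ} (h : KEq a b) : KEq b a :=
  haveI : Std.Symm KS := ⟨fun _ _ hs => KS_symm hs⟩
  (Relation.ReflTransGen.symmetric (r := KS)).symm _ _ h

theorem KEq_perm {a b : List ℕ} (h : KEq a b) : a.Perm b := by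
  induction h with
  | refl => exact List.Perm.refl _
  | tail _ hstep ih => exact ih.trans (KS_perm hstep)

theorem KS_ctx {w w' : List ℕ} (a b : List ℕ) (h : KS w w') : KS (a ++ w ++ b) (a ++ w' ++ b) := by
  obtain ⟨u, v, x, y, z, h1, h2, hc⟩ := h
  refine ⟨a ++ u, v ++ b, x, y, z, h1, h2, ?_⟩
  rcases hc with ⟨e1, e2⟩ | ⟨e1, e2⟩ | ⟨e1, e2⟩ | ⟨e1, e2⟩ <;> subst e1 <;> subst e2
  · exact Or.inl ⟨by simp, by simp⟩
  · exact Or.inr (Or.inl ⟨by simp, by simp⟩)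
  · exact Or.inr (Or.inr (Or.inl ⟨by simp, by simp⟩))
  · exact Or.inr (Or.inr (Or.inr ⟨by simp, by simp⟩))

theorem KEq_ctx {w w' : List ℕ} (a b : List ℕ) (h : KEq w w') :
    KEq (a ++ w ++ b) (a ++ w' ++ b) :=
  Relation.ReflTransGen.lift (fun w => a ++ w ++ b) (fun _ _ hs => KS_ctx a b hs) _ _ h

theorem KEq_append_left {w w' : List ℕ} (a : List ℕ) (h : KEq w w') : KEq (a ++ w) (a ++ w') := by
  have := KEq_ctx a [] h
  simpa using this

theorem KEq_append_right {w w' : List ℕ} (b : List ℕ) (h : KEq w w') : KEq (w ++ b) (w' ++ b) := by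
  have := KEq_ctx [] b h
  simpa using this

theorem KEq_cons {w w' : List ℕ} (a : ℕ) (h : KEq w w') : KEq (a :: w) (a :: w') := by
  have := KEq_append_left [a] h
  simpa using this

theorem KEq_moveLeft : ∀ (c : List ℕ) (c0 x : ℕ), Srt (c0 :: c) → (∀ a ∈ c0 :: c, x < a) →
    KEq ((c0 :: c) ++ [x]) (c0 :: x :: c) := by
  intro c
  induction c with
  | nil => intro c0 x _ _; exact KEq.refl _
  | cons c1 cs ih =>
    intro c0 x hs hmem
    have h1 : KEq ((c1 :: cs) ++ [x]) (c1 :: x :: cs) :=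
      ih c1 x (hs.sublist (List.sublist_cons_self _ _)) (fun a ha => hmem a (by simp [List.mem_cons] at ha ⊢; tauto))
    calc (c0 :: c1 :: cs) ++ [x] = c0 :: ((c1 :: cs) ++ [x]) := by simp
      _ ≋ c0 :: c1 :: x :: cs := KEq_cons c0 h1
      _ ≋ c0 :: x :: c1 :: cs := by
          refine KEq.single ⟨[], cs, x, c0, c1, ?_, ?_, Or.inr (Or.inl ⟨rfl, rfl⟩)⟩
          · exact hmem c0 (by simp)
          · exact List.rel_of_pairwise_cons hs (by simp)

theorem KEq_moveY : ∀ (u : List ℕ) (x y : ℕ) (v : List ℕ), Srt u → (∀ a ∈ u, a < x) → x < y →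
    KEq (u ++ y :: x :: v) (y :: (u ++ x :: v)) := by
  intro u
  induction u with
  | nil => intro x y v _ _ _; exact KEq.refl _
  | cons a u ih =>
    intro x y v hs hmem hxy
    have h1 : KEq (u ++ y :: x :: v) (y :: (u ++ x :: v)) :=
      ih x y v (hs.sublist (List.sublist_cons_self _ _)) (fun b hb => hmem b (by simp [hb])) hxy
    have hstep : KS (a :: y :: (u ++ x :: v)) (y :: a :: (u ++ x :: v)) := by
      rcases u with _ | ⟨b, u'⟩
      · refine ⟨[], v, a, x, y, hmem a (by simp), hxy, Or.inr (Or.inr (Or.inl ⟨rfl, rfl⟩))⟩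
      · refine ⟨[], u' ++ x :: v, a, b, y, ?_, ?_, Or.inr (Or.inr (Or.inl ⟨rfl, rfl⟩))⟩
        · exact List.rel_of_pairwise_cons hs (by simp)
        · exact lt_trans (hmem b (by simp)) hxy
    calc (a :: u) ++ y :: x :: v = a :: (u ++ y :: x :: v) := by simp
      _ ≋ a :: y :: (u ++ x :: v) := KEq_cons a h1
      _ ≋ y :: (a :: u) ++ x :: v := KEq.single hstep

theorem KEq_row (r : List ℕ) (x : ℕ) (hs : Srt r) (hx : x ∉ r) (i : ℕ) (hi : i < r.length)
    (hxi : x < r[i]) (hlow : ∀ j (hj : j < i), ¬ x < r[j]'(hj.trans hi)) :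
    KEq (r ++ [x]) (r[i] :: r.set i x) := by
  have hr : r = r.take i ++ r[i] :: r.drop (i + 1) := by
    conv_lhs => rw [← List.take_append_drop i r]
    congr 1
    exact List.drop_eq_getElem_cons hi
  have hset : r.set i x = r.take i ++ x :: r.drop (i + 1) := by
    rw [List.set_eq_take_append_cons_drop]
    simp [hi]
  have hsplit : Srt (r.take i) ∧ Srt (r[i] :: r.drop (i + 1)) ∧
      ∀ a ∈ r.take i, ∀ b ∈ r[i] :: r.drop (i + 1), a < b := by
    have h0 : Srt (r.take i ++ r[i] :: r.drop (i + 1)) := by rw [← hr]; exact hs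
    have h1 := List.pairwise_append.mp h0
    exact ⟨h1.1, h1.2.1, h1.2.2⟩
  have hmem1 : ∀ a ∈ r[i] :: r.drop (i + 1), x < a := by
    intro a ha
    rcases List.mem_cons.mp ha with h | h
    · exact h ▸ hxi
    · exact lt_trans hxi (List.rel_of_pairwise_cons hsplit.2.1 h)
  have hmem2 : ∀ a ∈ r.take i, a < x := by
    intro a ha
    rw [List.mem_take_iff_getElem] at ha
    obtain ⟨j, hj, hje⟩ := ha
    have h1 := hlow j (by omega)
    have h2 : r[j]'(by omega) ≠ x := fun hc => hx (hc ▸ List.getElem_mem _)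
    have := hje ▸ (by omega : r[j]'(by omega) < x)
    exact this
  calc r ++ [x] = r.take i ++ ((r[i] :: r.drop (i + 1)) ++ [x]) := by
        conv_lhs => rw [hr]
        rw [List.append_assoc]
    _ ≋ r.take i ++ (r[i] :: x :: r.drop (i + 1)) :=
        KEq_append_left _ (KEq_moveLeft _ _ _ hsplit.2.1 hmem1)
    _ = r.take i ++ r[i] :: x :: r.drop (i + 1) := rfl
    _ ≋ r[i] :: (r.take i ++ x :: r.drop (i + 1)) :=
        KEq_moveY _ _ _ _ hsplit.1 hmem2 hxi
    _ = r[i] :: r.set i x := by rw [hset]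

end FS13
namespace FS13
open List

def rword (t : List (List ℕ)) : List ℕ := t.reverse.flatten

theorem rword_cons (r : List ℕ) (rs : List (List ℕ)) : rword (r :: rs) = rword rs ++ r := by
  simp [rword]

theorem KEq_insertT : ∀ (t : List (List ℕ)) (x : ℕ), RowsS t → (x :: t.flatten).Nodup →
    KEq (rword t ++ [x]) (rword (insertT t x)) := by
  intro t
  induction t with
  | nil => intro x _ _; exact KEq.refl _
  | cons r rs ih =>
    intro x hrows hnd
    have hndf : ((r :: rs).flatten).Nodup := (List.nodup_cons.mp hnd).2
    have hxn : x ∉ (r :: rs).flatten := (List.nodup_cons.mp hnd).1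
    simp only [List.flatten_cons, List.nodup_append'] at hndf
    obtain ⟨hndr, hndrs, hdisj⟩ := hndf
    have hxr : x ∉ r := fun hc => hxn (by simp [hc])
    rcases rowIns_spec r x with ⟨heq, _⟩ | ⟨i, hi, heq, hxi, hlow⟩
    · have hins : insertT (r :: rs) x = (r ++ [x]) :: rs := by simp [insertT, heq]
      rw [hins, rword_cons, rword_cons]
      rw [← List.append_assoc]
      exact KEq.refl _
    · have hins : insertT (r :: rs) x = r.set i x :: insertT rs (r[i]) := by
        simp [insertT, heq]
      have hyrs : r[i] ∉ rs.flatten := hdisj (List.getElem_mem hi)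
      have h1 : KEq (r ++ [x]) (r[i] :: r.set i x) :=
        KEq_row r x (hrows r (by simp)) hxr i hi hxi hlow
      have h2 : KEq (rword rs ++ [r[i]]) (rword (insertT rs (r[i]))) :=
        ih (r[i]) (fun q hq => hrows q (by simp [hq])) (by
          rw [List.nodup_cons]; exact ⟨hyrs, hndrs⟩)
      rw [hins, rword_cons, rword_cons]
      calc (rword rs ++ r) ++ [x] = rword rs ++ (r ++ [x]) := by rw [List.append_assoc]
        _ ≋ rword rs ++ (r[i] :: r.set i x) := KEq_append_left _ h1
        _ = (rword rs ++ [r[i]]) ++ r.set i x := by simp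
        _ ≋ rword (insertT rs (r[i])) ++ r.set i x := KEq_append_right _ h2

theorem KEq_Ptab (w : List ℕ) (hw : w.Nodup) : KEq w (rword (Ptab w)) := by
  induction w using List.reverseRecOn with
  | nil => exact KEq.refl _
  | append_singleton w x ih =>
    have hw' : w.Nodup := (List.nodup_append.mp hw).1
    have hxw : x ∉ w := by
      have := (List.nodup_append'.mp hw).2.2
      intro hc; exact this hc (by simp)
    have hperm : (Ptab w).flatten.Perm w := (Ptab_inv w).1
    calc w ++ [x] ≋ rword (Ptab w) ++ [x] := KEq_append_right _ (ih hw')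
      _ ≋ rword (insertT (Ptab w) x) := KEq_insertT (Ptab w) x ((Ptab_inv w).2 hw')
          (by
            rw [List.nodup_cons]
            exact ⟨fun hc => hxw (hperm.mem_iff.mp hc), hperm.nodup_iff.mpr hw'⟩)
      _ = rword (Ptab (w ++ [x])) := by rw [Ptab_snoc]

/-! ### Bef -/

def Bef (w : List ℕ) (c d : ℕ) : Prop := ∃ w₁ w₂, w = w₁ ++ w₂ ∧ c ∈ w₁ ∧ d ∈ w₂

theorem Bef_swap {p q c d : ℕ} (u t : List ℕ) (h1 : ¬(c = p ∧ d = q)) (h2 : ¬(c = q ∧ d = p))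
    (hb : Bef (u ++ p :: q :: t) c d) : Bef (u ++ q :: p :: t) c d := by
  obtain ⟨w₁, w₂, heq, hc, hd⟩ := hb
  rcases List.append_eq_append_iff.mp heq.symm with ⟨a, ha1, ha2⟩ | ⟨a, ha1, ha2⟩
  · -- u = w₁ ++ a, w₂ = a ++ p :: q :: t
    refine ⟨w₁, a ++ q :: p :: t, by rw [ha1]; simp, hc, ?_⟩
    rw [ha2] at hd
    simp only [List.mem_append, List.mem_cons] at hd ⊢
    tauto
  · -- w₁ = u ++ a, p :: q :: t = a ++ w₂
    match a, ha2 with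
    | [], ha2 =>
      rw [List.nil_append] at ha2
      refine ⟨u, q :: p :: t, rfl, by rw [ha1] at hc; simpa using hc, ?_⟩
      rw [← ha2] at hd
      simp only [List.mem_cons] at hd ⊢
      tauto
    | [a0], ha2 =>
      rw [List.singleton_append] at ha2
      injection ha2 with hpa hw2
      subst hpa
      rw [ha1] at hc
      rcases List.mem_append.mp hc with hcu | hcp
      · refine ⟨u, q :: p :: t, rfl, hcu, ?_⟩
        rw [← hw2] at hd
        simp only [List.mem_cons] at hd ⊢
        tauto
      · simp only [List.mem_singleton] at hcp
        subst hcp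
        rw [← hw2] at hd
        have hdt : d ∈ t := by
          rcases List.mem_cons.mp hd with h | h
          · exact absurd ⟨rfl, h⟩ h1
          · exact h
        exact ⟨u ++ [q, c], t, by simp, by simp, hdt⟩
    | a0 :: a1 :: a', ha2 =>
      rw [List.cons_append, List.cons_append] at ha2
      injection ha2 with hpa hrest
      injection hrest with hqa ht
      subst hpa; subst hqa
      refine ⟨u ++ q :: p :: a', w₂, by rw [ht]; simp, ?_, hd⟩
      rw [ha1] at hc
      simp only [List.mem_append, List.mem_cons] at hc ⊢
      tauto

theorem Bef_KS_mp {w w' : List ℕ} (v : ℕ) (h : KS w w') (hb : Bef w (v + 1) v) :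
    Bef w' (v + 1) v := by
  obtain ⟨u, t, x, y, z, hxy, hyz, hc⟩ := h
  have ex1 : ¬(v + 1 = x ∧ v = z) := by rintro ⟨e1, e2⟩; omega
  have ex2 : ¬(v + 1 = z ∧ v = x) := by rintro ⟨e1, e2⟩; omega
  rcases hc with ⟨e1, e2⟩ | ⟨e1, e2⟩ | ⟨e1, e2⟩ | ⟨e1, e2⟩ <;> subst e1 <;> subst e2
  · have := Bef_swap (u ++ [y]) t ex1 ex2 (by simpa [List.append_assoc] using hb)
    simpa [List.append_assoc] using this
  · have := Bef_swap (u ++ [y]) t ex2 ex1 (by simpa [List.append_assoc] using hb)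
    simpa [List.append_assoc] using this
  · have := Bef_swap u (y :: t) ex1 ex2 (by simpa [List.append_assoc] using hb)
    simpa [List.append_assoc] using this
  · have := Bef_swap u (y :: t) ex2 ex1 (by simpa [List.append_assoc] using hb)
    simpa [List.append_assoc] using this

theorem Bef_KEq {w w' : List ℕ} (v : ℕ) (h : KEq w w') (hb : Bef w (v + 1) v) :
    Bef w' (v + 1) v := by
  induction h with
  | refl => exact hb
  | tail _ hstep ih => exact Bef_KS_mp v hstep ih

end FS13
namespace FS13
open List

theorem countP_range_lt (n m : ℕ) :
    (List.range n).countP (fun j => decide (j < m)) = min m n := by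
  induction n with
  | zero => simp
  | succ n ih =>
    rw [List.range_succ, List.countP_append, ih, List.countP_cons, List.countP_nil]
    by_cases h : n < m
    · rw [if_pos (by simpa using h)]
      omega
    · rw [if_neg (by simpa using h)]
      omega

theorem countP_or_eq (l : List ℕ) (q : ℕ → Bool) (i : ℕ) (h : q i = false) :
    l.countP (fun j => q j || j == i) = l.countP q + l.count i := by
  induction l with
  | nil => simp
  | cons a l ih =>
    rw [List.countP_cons, List.countP_cons, List.count_cons, ih]
    by_cases ha : a = i
    · subst ha
      rw [h]
      norm_num
      omega
    · have h1 : (a == i) = false := by simp [ha]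
      rw [h1]
      simp only [Bool.or_false]
      by_cases hq : q a = true
      · rw [if_pos hq]
        norm_num
        omega
      · rw [if_neg hq]
        norm_num

theorem count_range_eq_one {n i : ℕ} (h : i < n) : (List.range n).count i = 1 := by
  rw [List.count_eq_one_of_mem (List.nodup_range (n := n)) (List.mem_range.mpr h)]

theorem map_getD_range (w : List ℕ) :
    (List.range w.length).map (fun j => w.getD j 0) = w := by
  apply List.ext_getElem
  · simp
  · intro i h1 h2
    simp only [List.getElem_map, List.getElem_range]
    exact List.getD_eq_getElem w 0 h2

theorem countP_lt_perm {w : List ℕ} (hw : IsPermList w) {c : ℕ} (h1 : 1 ≤ c)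
    (h2 : c ≤ w.length + 1) :
    w.countP (fun a => decide (a < c)) = c - 1 := by
  rw [List.Perm.countP_eq _ hw, List.range'_eq_map_range, List.countP_map]
  have he : (List.range w.length).countP ((fun a => decide (a < c)) ∘ fun x => 1 + x) =
      (List.range w.length).countP (fun j => decide (j < c - 1)) := by
    refine List.countP_congr ?_
    intro j _
    simp only [Function.comp_apply, decide_eq_true_eq]
    omega
  rw [he, countP_range_lt]
  omega

theorem stdz_perm {w : List ℕ} (hw : IsPermList w) : stdz w = w := by
  have hnd := isPerm_nodup hw
  apply List.ext_getElem
  · simp [stdz]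
  · intro i h1 h2
    simp only [stdz, List.getElem_map, List.getElem_range, List.length_map,
      List.length_range] at h1 ⊢
    rw [← List.countP_eq_length_filter]
    have hc1 : 1 ≤ w.getD i 0 ∧ w.getD i 0 ≤ w.length := by
      rw [List.getD_eq_getElem w 0 h2]
      exact (isPerm_mem hw).mp (List.getElem_mem h2)
    have hPQ : ∀ j ∈ List.range w.length,
        (decide (w.getD j 0 < w.getD i 0 ∨ (w.getD j 0 = w.getD i 0 ∧ j ≤ i)) = true) ↔
        (((decide (w.getD j 0 < w.getD i 0)) || (j == i)) = true) := by
      intro j hj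
      rw [List.mem_range] at hj
      have hji : w.getD j 0 = w.getD i 0 ↔ j = i := by
        rw [List.getD_eq_getElem w 0 hj, List.getD_eq_getElem w 0 h2]
        exact hnd.getElem_inj_iff
      by_cases hcase : j = i
      · subst hcase
        simp
      · simp only [decide_eq_true_eq, Bool.or_eq_true, beq_iff_eq, hji]
        tauto
    rw [List.countP_congr hPQ, countP_or_eq _ _ _ (by simp), count_range_eq_one h2]
    have hmap : (List.range w.length).countP (fun j => decide (w.getD j 0 < w.getD i 0)) =
        w.countP (fun a => decide (a < w.getD i 0)) := by
      have h := List.countP_map (p := fun a => decide (a < w.getD i 0)) (f := fun j => w.getD j 0)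
        (l := List.range w.length)
      rw [map_getD_range w] at h
      rw [h]
      rfl
    rw [hmap, countP_lt_perm hw hc1.1 (by omega), List.getD_eq_getElem w 0 h2]
    have := (isPerm_mem hw).mp (List.getElem_mem h2)
    omega

theorem mem_IdSet {w : List ℕ} (hw : IsPermList w) (v : ℕ) :
    v ∈ IdSet w ↔ 1 ≤ v ∧ v ≤ w.length ∧ Bef w (v + 1) v := by
  rw [IdSet, Finset.mem_filter, Finset.mem_Icc, stdz_perm hw]
  constructor
  · rintro ⟨⟨h1, h2⟩, i, hi, j, hj, hji, hvi, hvj⟩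
    simp only [Finset.mem_range] at hi hj
    refine ⟨h1, h2, w.take (j + 1), w.drop (j + 1), (List.take_append_drop _ _).symm, ?_, ?_⟩
    · rw [List.getD_eq_getElem w 0 hj] at hvj
      rw [← hvj]
      rw [List.mem_take_iff_getElem]
      exact ⟨j, by omega, rfl⟩
    · rw [List.getD_eq_getElem w 0 hi] at hvi
      rw [← hvi]
      have he : w[i] = (w.drop (j + 1))[i - (j + 1)]'(by simp; omega) := by
        rw [List.getElem_drop]
        congr 1
        omega
      rw [he]
      exact List.getElem_mem _
  · rintro ⟨h1, h2, w₁, w₂, heq, hc, hd⟩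
    refine ⟨⟨h1, h2⟩, ?_⟩
    obtain ⟨i', hi', hie⟩ := List.mem_iff_getElem.mp hd
    obtain ⟨j', hj', hje⟩ := List.mem_iff_getElem.mp hc
    have hlen : w.length = w₁.length + w₂.length := by rw [heq]; simp
    refine ⟨w₁.length + i', Finset.mem_range.mpr (by omega), j',
      Finset.mem_range.mpr (by omega), by omega, ?_, ?_⟩
    · rw [heq, List.getD_append_right _ _ _ _ (by omega)]
      rw [show w₁.length + i' - w₁.length = i' by omega]
      rw [List.getD_eq_getElem w₂ 0 hi']
      exact hie
    · rw [heq, List.getD_append _ _ _ _ hj', List.getD_eq_getElem w₁ 0 hj']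
      exact hje

theorem KEq_isPerm {a b : List ℕ} (h : KEq a b) (ha : IsPermList a) : IsPermList b := by
  have hp := KEq_perm h
  rw [IsPermList, ← hp.length_eq]
  exact hp.symm.trans ha

theorem IdSet_KS {a b : List ℕ} (h : KS a b) (ha : IsPermList a) : IdSet a = IdSet b := by
  have hperm := KS_perm h
  have hb : IsPermList b := by
    rw [IsPermList, ← hperm.length_eq]
    exact hperm.symm.trans ha
  apply Finset.ext
  intro v
  rw [mem_IdSet ha v, mem_IdSet hb v, ← hperm.length_eq]
  constructor
  · rintro ⟨h1, h2, h3⟩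
    exact ⟨h1, h2, Bef_KS_mp v h h3⟩
  · rintro ⟨h1, h2, h3⟩
    exact ⟨h1, h2, Bef_KS_mp v (KS_symm h) h3⟩

theorem IdSet_KEq {a b : List ℕ} (h : KEq a b) (ha : IsPermList a) : IdSet a = IdSet b := by
  induction h with
  | refl => rfl
  | tail hab hstep ih => exact ih.trans (IdSet_KS hstep (KEq_isPerm hab ha))

end FS13
/-- ȷ preserves the inverse descent set and complements the descent set to n. -/
theorem stmt13 (l σ : List ℕ) (hl : IsPermList l) (h : isFS σ l) :
    IdSet σ = IdSet l ∧ DSet σ = (DSet l).image fun k => l.length - k := by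
  obtain ⟨hσp, hlen, hP, hQ⟩ := h
  have hlnd := FS13.isPerm_nodup hl
  have hσnd := FS13.isPerm_nodup hσp
  constructor
  · have h2 := (FS13.KEq_Ptab l hlnd).symm
    rw [← hP] at h2
    exact FS13.IdSet_KEq ((FS13.KEq_Ptab σ hσnd).trans h2) hσp
  · have hrc : IsPermList (rcL l) := FS13.rcL_isPerm hl
    have hds : DSet σ = DSet (rcL l) :=
      FS13.DSet_of_Q hσnd (FS13.isPerm_nodup hrc) (by rw [hlen, FS13.rcL_length]) hQ
    rw [hds, FS13.DSet_rcL hl]
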